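/- Let L ≥ 3 and let D be a set of vertices of the planar surface code lattice disjoint from the boundary set B (D ⊆ V∖B). Let J ∈ F₂^{E} have minimum Hamming weight subject to ∂₁ J = 𝟙_D (such J always exists). Then there exists a 2-chain c ∈ F₂^{P} such that J' = J + ∂₂ c satisfies: the Hamming weight of J' equals that of J, ∂₁ J' = 𝟙_D, and every vertex of D is an endpoint of exactly one edge in the support of J'. In particular, there is a minimum-weight solution of ∂₁ J = 𝟙_D in which every vertex of D is incident to exactly one edge of the support of J. -/

import Mathlib

/-- Edge indices of the planar surface code lattice: `Sum.inl (r, c)` is the horizontal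
edge joining `(r, c)` and `(r, c+1)` (for `0 ≤ r ≤ L-1`, `0 ≤ c ≤ L-1`); `Sum.inr (r, k)`
is the vertical edge joining `(r, k+1)` and `(r+1, k+1)` (for `0 ≤ r ≤ L-2`,
`1 ≤ k+1 ≤ L-1`).  In total there are `L² + (L-1)² = 2L² - 2L + 1` edges. -/
abbrev SE (L : ℕ) := (Fin L × Fin L) ⊕ (Fin (L - 1) × Fin (L - 1))

/-- Plaquette indices: plaquette `(r, c)` (for `0 ≤ r ≤ L-2`, `0 ≤ c ≤ L-1`) is the unit
cell with corners `(r,c), (r,c+1), (r+1,c), (r+1,c+1)`. -/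
abbrev SP (L : ℕ) := Fin (L - 1) × Fin L

/-- Interior (non-boundary) vertices `V ∖ B`: the pair `(r, k)` stands for the vertex
`(r, k+1)`, i.e. the vertices in columns `1, …, L-1`. -/
abbrev SV (L : ℕ) := Fin L × Fin (L - 1)

/-- Edge–plaquette incidence matrix over `F₂`: the boundary of a plaquette consists of
its (at most four) sides that belong to the edge set. -/
def sM2 (L : ℕ) : Matrix (SE L) (SP L) (ZMod 2) := fun e q =>
  match e with
  | Sum.inl rc =>
      if (rc.1.val = q.1.val ∨ rc.1.val = q.1.val + 1) ∧ rc.2.val = q.2.val then 1 else 0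
  | Sum.inr rk =>
      if rk.1.val = q.1.val ∧ (rk.2.val = q.2.val ∨ rk.2.val + 1 = q.2.val) then 1 else 0

/-- Interior-vertex–edge incidence matrix over `F₂` (a vertex of `B` contributes
nothing: this is the relative incidence). -/
def sM1 (L : ℕ) : Matrix (SV L) (SE L) (ZMod 2) := fun v e =>
  match e with
  | Sum.inl rc =>
      if rc.1.val = v.1.val ∧ (rc.2.val = v.2.val ∨ rc.2.val = v.2.val + 1) then 1 else 0
  | Sum.inr rk =>
      if rk.2.val = v.2.val ∧ (rk.1.val = v.1.val ∨ rk.1.val + 1 = v.1.val) then 1 else 0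

/-- The boundary map `∂₂ : F₂^{P} → F₂^{E}`, sending the indicator of a plaquette to the
sum of the indicators of its boundary edges in `E`. -/
def sD2 (L : ℕ) : (SP L → ZMod 2) →ₗ[ZMod 2] (SE L → ZMod 2) := (sM2 L).mulVecLin

/-- The relative boundary map `∂₁ : F₂^{E} → F₂^{V∖B}`, sending the indicator of an edge
to the sum of the indicators of its endpoints lying outside `B`. -/
def sD1 (L : ℕ) : (SE L → ZMod 2) →ₗ[ZMod 2] (SV L → ZMod 2) := (sM1 L).mulVecLin

/-- The transpose `∂₁^* : F₂^{E} → F₂^{P}` of `∂₂`. -/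
def sD1s (L : ℕ) : (SE L → ZMod 2) →ₗ[ZMod 2] (SP L → ZMod 2) :=
  (Matrix.transpose (sM2 L)).mulVecLin

/-- The transpose `∂₂^* : F₂^{V∖B} → F₂^{E}` of `∂₁`. -/
def sD2s (L : ℕ) : (SV L → ZMod 2) →ₗ[ZMod 2] (SE L → ZMod 2) :=
  (Matrix.transpose (sM1 L)).mulVecLin

/-- Hamming weight of an `F₂`-vector. -/
def wt {α : Type*} [Fintype α] (x : α → ZMod 2) : ℕ :=
  (Finset.univ.filter fun a => x a ≠ 0).card

/-- Indicator vector of a finite set of coordinates. -/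
def ind {α : Type*} [Fintype α] [DecidableEq α] (D : Finset α) : α → ZMod 2 :=
  fun a => if a ∈ D then 1 else 0

section Aux
variable {L : ℕ}

theorem sM1_mul_sM2 (L : ℕ) : sM1 L * sM2 L = 0 := by
  ext v q
  rw [Matrix.mul_apply, Matrix.zero_apply, Fintype.sum_sum_type]
  obtain ⟨⟨rv, hrv⟩, ⟨kv, hkv⟩⟩ := v
  obtain ⟨⟨qa, hqa⟩, ⟨qb, hqb⟩⟩ := q
  have hC : ((rv = qa ∨ rv = qa + 1) ∧ (qb = kv ∨ qb = kv + 1)) ↔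
      ((qa = rv ∨ qa + 1 = rv) ∧ (kv = qb ∨ kv + 1 = qb)) := by omega
  have h1 : (∑ a : Fin L × Fin L,
      sM1 L (⟨rv, hrv⟩, ⟨kv, hkv⟩) (Sum.inl a) * sM2 L (Sum.inl a) (⟨qa, hqa⟩, ⟨qb, hqb⟩))
      = if ((rv = qa ∨ rv = qa + 1) ∧ (qb = kv ∨ qb = kv + 1)) then (1 : ZMod 2) else 0 := by
    rw [Finset.sum_congr rfl (g := fun a : Fin L × Fin L =>
        if a = (⟨rv, hrv⟩, ⟨qb, hqb⟩) then
          (if ((rv = qa ∨ rv = qa + 1) ∧ (qb = kv ∨ qb = kv + 1)) then (1 : ZMod 2) else 0)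
        else 0) (fun a _ => ?_)]
    · rw [Finset.sum_ite_eq' Finset.univ]
      simp
    · obtain ⟨⟨a1, ha1⟩, ⟨a2, ha2⟩⟩ := a
      simp only [sM1, sM2, Prod.mk.injEq, Prod.ext_iff, Fin.mk.injEq]
      split_ifs <;> first | rfl | (exfalso; omega)
  have h2 : (∑ a : Fin (L-1) × Fin (L-1),
      sM1 L (⟨rv, hrv⟩, ⟨kv, hkv⟩) (Sum.inr a) * sM2 L (Sum.inr a) (⟨qa, hqa⟩, ⟨qb, hqb⟩))
      = if ((qa = rv ∨ qa + 1 = rv) ∧ (kv = qb ∨ kv + 1 = qb)) then (1 : ZMod 2) else 0 := by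
    rw [Finset.sum_congr rfl (g := fun a : Fin (L-1) × Fin (L-1) =>
        if a = (⟨qa, hqa⟩, ⟨kv, hkv⟩) then
          (if ((qa = rv ∨ qa + 1 = rv) ∧ (kv = qb ∨ kv + 1 = qb)) then (1 : ZMod 2) else 0)
        else 0) (fun a _ => ?_)]
    · rw [Finset.sum_ite_eq' Finset.univ]
      simp
    · obtain ⟨⟨a1, ha1⟩, ⟨a2, ha2⟩⟩ := a
      simp only [sM1, sM2, Prod.mk.injEq, Prod.ext_iff, Fin.mk.injEq]
      split_ifs <;> first | rfl | (exfalso; omega)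
  rw [h1, h2, if_congr hC rfl rfl]
  split_ifs <;> decide

theorem sD1_sD2 (L : ℕ) (c : SP L → ZMod 2) : sD1 L (sD2 L c) = 0 := by
  show (sM1 L).mulVec ((sM2 L).mulVec c) = 0
  rw [Matrix.mulVec_mulVec, sM1_mul_sM2]
  simp [Matrix.mulVec]


theorem z2cases (x : ZMod 2) : x = 0 ∨ x = 1 := by revert x; decide

theorem wt_add_ind {α : Type*} [Fintype α] [DecidableEq α] (K : α → ZMod 2) (S : Finset α) :
    wt (K + ind S) + 2 * (S.filter fun e => K e ≠ 0).card = wt K + S.card := by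
  classical
  set A := Finset.univ.filter fun e => K e ≠ 0 with hA
  have hsupp : (Finset.univ.filter fun e => (K + ind S) e ≠ 0) = (A \ S) ∪ (S \ A) := by
    ext e
    rw [Finset.mem_filter]
    simp only [Finset.mem_filter, Finset.mem_univ, true_and, Finset.mem_union,
      Finset.mem_sdiff, hA, Pi.add_apply, ind]
    rcases z2cases (K e) with h | h <;> by_cases hs : e ∈ S <;> simp [h, hs] <;> decide
  have hd : Disjoint (A \ S) (S \ A) := by
    refine Finset.disjoint_left.mpr ?_
    intro x hx hy
    exact (Finset.mem_sdiff.mp hy).2 (Finset.mem_sdiff.mp hx).1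
  have h1 : (A \ S).card + (A ∩ S).card = A.card := Finset.card_sdiff_add_card_inter A S
  have h2 : (S \ A).card + (S ∩ A).card = S.card := Finset.card_sdiff_add_card_inter S A
  have h3 : S ∩ A = S.filter fun e => K e ≠ 0 := by
    ext e; simp [hA, Finset.mem_inter, Finset.mem_filter]
  have h1' : (A \ S).card + (S ∩ A).card = A.card := by
    rw [Finset.inter_comm S A]; exact h1
  have h0 : wt (K + ind S) = (A \ S).card + (S \ A).card := by
    rw [wt, hsupp, Finset.card_union_of_disjoint hd]
  have h3' : (S.filter fun e => K e ≠ 0).card = (S ∩ A).card := by rw [h3]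
  have h5 : wt K = A.card := rfl
  rw [h3', h0, h5]
  omega

/-- weight of a vertical edge for the potential function -/
def yy (L : ℕ) (g : Fin (L-1) × Fin (L-1)) : ℕ :=
  if g.1.val % 2 = 0 then g.2.val + 1 else L - 1 - g.2.val

/-- potential function: weighted count of vertical edges in the support -/
def Phi (L : ℕ) (K : SE L → ZMod 2) : ℕ :=
  ∑ g : Fin (L-1) × Fin (L-1), if K (Sum.inr g) ≠ 0 then yy L g else 0

theorem Phi_update (K : SE L → ZMod 2) (S : Finset (SE L))
    (g1 g2 : Fin (L-1) × Fin (L-1)) (hne : g1 ≠ g2)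
    (h1 : K (Sum.inr g1) = 1) (h2 : K (Sum.inr g2) = 0)
    (hmem : ∀ g, Sum.inr g ∈ S ↔ g = g1 ∨ g = g2) :
    Phi L (K + ind S) + yy L g1 = Phi L K + yy L g2 := by
  classical
  have hg2 : g2 ∈ Finset.univ.erase g1 :=
    Finset.mem_erase.mpr ⟨fun h => hne h.symm, Finset.mem_univ _⟩
  have hdec : ∀ M : SE L → ZMod 2,
      Phi L M = (if M (Sum.inr g1) ≠ 0 then yy L g1 else 0) +
        ((if M (Sum.inr g2) ≠ 0 then yy L g2 else 0) +
          ∑ g ∈ (Finset.univ.erase g1).erase g2,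
            (if M (Sum.inr g) ≠ 0 then yy L g else 0)) := by
    intro M
    rw [Phi, ← Finset.add_sum_erase _ _ (Finset.mem_univ g1), ← Finset.add_sum_erase _ _ hg2]
  have hrest : ∀ g ∈ (Finset.univ.erase g1).erase g2,
      (K + ind S) (Sum.inr g) = K (Sum.inr g) := by
    intro g hg
    have hgg2 := (Finset.mem_erase.mp hg).1
    have hgg1 := (Finset.mem_erase.mp (Finset.mem_erase.mp hg).2).1
    have : Sum.inr g ∉ S := by
      rw [hmem]; rintro (h | h); exact hgg1 h; exact hgg2 h
    simp [ind, this]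
  have hk1 : (K + ind S) (Sum.inr g1) = 0 := by
    have : Sum.inr g1 ∈ S := (hmem g1).mpr (Or.inl rfl)
    simp [ind, this, h1]
    decide
  have hk2 : (K + ind S) (Sum.inr g2) = 1 := by
    have : Sum.inr g2 ∈ S := (hmem g2).mpr (Or.inr rfl)
    simp [ind, this, h2]
  rw [hdec (K + ind S), hdec K,
    Finset.sum_congr rfl (fun g hg => by rw [hrest g hg]), hk1, hk2, h1, h2]
  simp
  omega


theorem sD2_single (L : ℕ) (q : SP L) (e : SE L) :
    sD2 L (Pi.single q 1) e = sM2 L e q := by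
  show (sM2 L).mulVec (Pi.single q 1) e = _
  rw [Matrix.mulVec_single]; exact mul_one _

theorem core_int (L : ℕ) (hL : 3 ≤ L) (D : Finset (SV L)) (J : SE L → ZMod 2)
    (hmin : ∀ K : SE L → ZMod 2, sD1 L K = ind D → wt J ≤ wt K)
    (c0 : SP L → ZMod 2)
    (hKb : sD1 L (J + sD2 L c0) = ind D)
    (hKwt : wt (J + sD2 L c0) = wt J)
    (hPhi : ∀ c', wt (J + sD2 L c') = wt J →
      Phi L (J + sD2 L c0) ≤ Phi L (J + sD2 L c'))
    (a b v1 v2 : ℕ)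
    (ha : a < L - 1) (hb1 : 1 ≤ b) (hb2 : b ≤ L - 2)
    (hv12 : (v1 = b ∧ v2 = b - 1 ∧ a % 2 = 0) ∨ (v1 = b - 1 ∧ v2 = b ∧ a % 2 = 1))
    (haL : a < L) (ha1 : a + 1 < L) (hbL : b < L) (hv1L : v1 < L - 1) (hv2L : v2 < L - 1)
    (hh : (J + sD2 L c0) (Sum.inl (⟨a, haL⟩, ⟨b, hbL⟩)) = 1 ∨
          (J + sD2 L c0) (Sum.inl (⟨a + 1, ha1⟩, ⟨b, hbL⟩)) = 1)
    (hv : (J + sD2 L c0) (Sum.inr (⟨a, ha⟩, ⟨v1, hv1L⟩)) = 1) : False := by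
  classical
  set K := J + sD2 L c0 with hK
  set et : SE L := Sum.inl (⟨a, haL⟩, ⟨b, hbL⟩) with het
  set eb : SE L := Sum.inl (⟨a + 1, ha1⟩, ⟨b, hbL⟩) with heb
  set e1 : SE L := Sum.inr (⟨a, ha⟩, ⟨v1, hv1L⟩) with he1
  set e2 : SE L := Sum.inr (⟨a, ha⟩, ⟨v2, hv2L⟩) with he2
  set q : SP L := (⟨a, ha⟩, ⟨b, hbL⟩) with hq
  set S : Finset (SE L) := {et, eb, e1, e2} with hS
  have hv1v2 : v1 ≠ v2 := by omega
  have hindS : ∀ e, sM2 L e q = ind S e := by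
    intro e
    rcases e with ⟨⟨x1, hx1⟩, ⟨x2, hx2⟩⟩ | ⟨⟨x1, hx1⟩, ⟨x2, hx2⟩⟩ <;>
      simp only [sM2, ind, hS, het, heb, he1, he2, hq, Finset.mem_insert,
        Finset.mem_singleton, Sum.inl.injEq, Sum.inr.injEq, Prod.mk.injEq,
        Fin.mk.injEq, reduceCtorEq, or_false, false_or] <;>
      split_ifs <;> first | rfl | (exfalso; omega)
  have hSd2 : ind S = sD2 L (Pi.single q 1) :=
    funext fun e => ((sD2_single L q e).trans (hindS e)).symm
  have hm1 : et ∉ ({eb, e1, e2} : Finset (SE L)) := by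
    simp only [het, heb, he1, he2, Finset.mem_insert, Finset.mem_singleton,
      Sum.inl.injEq, Sum.inr.injEq, Prod.mk.injEq, Fin.mk.injEq, reduceCtorEq, or_false,
      false_or]
    omega
  have hm2 : eb ∉ ({e1, e2} : Finset (SE L)) := by
    simp only [heb, he1, he2, Finset.mem_insert, Finset.mem_singleton, reduceCtorEq,
      or_false, false_or, not_false_eq_true]
  have hm3 : e1 ∉ ({e2} : Finset (SE L)) := by
    simp only [he1, he2, Finset.mem_singleton, Sum.inr.injEq, Prod.mk.injEq, Fin.mk.injEq]
    omega
  have hcard : S.card = 4 := by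
    rw [hS, Finset.card_insert_of_notMem hm1, Finset.card_insert_of_notMem hm2,
      Finset.card_insert_of_notMem hm3, Finset.card_singleton]
  -- the chosen horizontal edge
  obtain ⟨eh, hehS, hehval, heh'⟩ : ∃ eh, eh ∈ S ∧ K eh = 1 ∧ (eh = et ∨ eh = eb) := by
    rcases hh with hh | hh
    · exact ⟨et, by simp [hS], hh, Or.inl rfl⟩
    · exact ⟨eb, by simp [hS], hh, Or.inr rfl⟩
  have hehe1 : eh ≠ e1 := by
    rcases heh' with h | h <;> rw [h] <;> exact Sum.inl_ne_inr
  have hpair : ({eh, e1} : Finset (SE L)) ⊆ S.filter fun e => K e ≠ 0 := by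
    intro x hx
    simp only [Finset.mem_insert, Finset.mem_singleton] at hx
    rcases hx with rfl | rfl
    · exact Finset.mem_filter.mpr ⟨hehS, by rw [hehval]; exact one_ne_zero⟩
    · refine Finset.mem_filter.mpr ⟨by simp [hS], by rw [hv]; exact one_ne_zero⟩
  have hpaircard : ({eh, e1} : Finset (SE L)).card = 2 := by
    rw [Finset.card_insert_of_notMem (by simpa using hehe1), Finset.card_singleton]
  have hmge : 2 ≤ (S.filter fun e => K e ≠ 0).card := by
    have := Finset.card_le_card hpair
    omega
  -- boundary of K + ind S
  have hb' : sD1 L (K + ind S) = ind D := by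
    rw [map_add, hKb, hSd2, sD1_sD2, add_zero]
  have hwt4 : wt (K + ind S) + 2 * (S.filter fun e => K e ≠ 0).card = wt K + 4 := by
    rw [wt_add_ind, hcard]
  have hminK' := hmin _ hb'
  have hmle : (S.filter fun e => K e ≠ 0).card ≤ 2 := by omega
  have hfeq : ({eh, e1} : Finset (SE L)) = S.filter fun e => K e ≠ 0 :=
    Finset.eq_of_subset_of_card_le hpair (by omega)
  have he2val : K e2 = 0 := by
    rcases z2cases (K e2) with h | h
    · exact h
    · exfalso
      have : e2 ∈ S.filter fun e => K e ≠ 0 :=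
        Finset.mem_filter.mpr ⟨by simp [hS], by rw [h]; exact one_ne_zero⟩
      rw [← hfeq] at this
      simp only [Finset.mem_insert, Finset.mem_singleton] at this
      rcases this with h' | h'
      · rcases heh' with h'' | h'' <;> rw [h''] at h' <;> exact Sum.inr_ne_inl h'
      · rw [he1, he2] at h'
        simp only [Sum.inr.injEq, Prod.mk.injEq, Fin.mk.injEq] at h'
        omega
  have hwteq : wt (K + ind S) = wt K := by omega
  have hmemr : ∀ g : Fin (L-1) × Fin (L-1), Sum.inr g ∈ S ↔
      g = (⟨a, ha⟩, ⟨v1, hv1L⟩) ∨ g = (⟨a, ha⟩, ⟨v2, hv2L⟩) := by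
    intro g
    simp only [hS, het, heb, he1, he2, Finset.mem_insert, Finset.mem_singleton,
      Sum.inr.injEq, reduceCtorEq, false_or]
  have hgne : ((⟨a, ha⟩, ⟨v1, hv1L⟩) : Fin (L-1) × Fin (L-1)) ≠ (⟨a, ha⟩, ⟨v2, hv2L⟩) := by
    intro h
    exact hv1v2 (by simpa using congrArg (fun p => p.2.val) h)
  have hup := Phi_update K S _ _ hgne hv he2val hmemr
  have hyyv : ∀ (w : ℕ) (hw : w < L - 1),
      yy L ((⟨a, ha⟩, ⟨w, hw⟩) : Fin (L-1) × Fin (L-1)) =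
        if a % 2 = 0 then w + 1 else L - 1 - w := fun w hw => rfl
  have hyy : yy L ((⟨a, ha⟩, ⟨v2, hv2L⟩) : Fin (L-1) × Fin (L-1)) + 1 =
      yy L ((⟨a, ha⟩, ⟨v1, hv1L⟩) : Fin (L-1) × Fin (L-1)) := by
    rw [hyyv, hyyv]
    rcases hv12 with ⟨h1, h2, h3⟩ | ⟨h1, h2, h3⟩ <;> simp [h3] <;> omega
  have hfin : Phi L (K + ind S) < Phi L K := by omega
  have hwtc : wt (J + sD2 L (c0 + Pi.single q 1)) = wt J := by
    rw [map_add, ← add_assoc, ← hK, ← hSd2, hwteq, hKwt]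
  have := hPhi (c0 + Pi.single q 1) hwtc
  rw [map_add, ← add_assoc, ← hK, ← hSd2] at this
  omega


theorem core_bdy (L : ℕ) (hL : 3 ≤ L) (D : Finset (SV L)) (J : SE L → ZMod 2)
    (hmin : ∀ K : SE L → ZMod 2, sD1 L K = ind D → wt J ≤ wt K)
    (c0 : SP L → ZMod 2)
    (hKb : sD1 L (J + sD2 L c0) = ind D)
    (hKwt : wt (J + sD2 L c0) = wt J)
    (a b vb : ℕ) (ha : a < L - 1)
    (hbv : (b = 0 ∧ vb = 0) ∨ (b = L - 1 ∧ vb = L - 2))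
    (haL : a < L) (ha1 : a + 1 < L) (hbL : b < L) (hvbL : vb < L - 1)
    (hh : (J + sD2 L c0) (Sum.inl (⟨a, haL⟩, ⟨b, hbL⟩)) = 1 ∨
          (J + sD2 L c0) (Sum.inl (⟨a + 1, ha1⟩, ⟨b, hbL⟩)) = 1)
    (hv : (J + sD2 L c0) (Sum.inr (⟨a, ha⟩, ⟨vb, hvbL⟩)) = 1) : False := by
  classical
  set K := J + sD2 L c0 with hK
  set et : SE L := Sum.inl (⟨a, haL⟩, ⟨b, hbL⟩) with het
  set eb : SE L := Sum.inl (⟨a + 1, ha1⟩, ⟨b, hbL⟩) with heb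
  set ev : SE L := Sum.inr (⟨a, ha⟩, ⟨vb, hvbL⟩) with hev
  set q : SP L := (⟨a, ha⟩, ⟨b, hbL⟩) with hq
  set S : Finset (SE L) := {et, eb, ev} with hS
  have hindS : ∀ e, sM2 L e q = ind S e := by
    intro e
    rcases e with ⟨⟨x1, hx1⟩, ⟨x2, hx2⟩⟩ | ⟨⟨x1, hx1⟩, ⟨x2, hx2⟩⟩ <;>
      simp only [sM2, ind, hS, het, heb, hev, hq, Finset.mem_insert,
        Finset.mem_singleton, Sum.inl.injEq, Sum.inr.injEq, Prod.mk.injEq,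
        Fin.mk.injEq, reduceCtorEq, or_false, false_or] <;>
      split_ifs <;> first | rfl | (exfalso; omega)
  have hSd2 : ind S = sD2 L (Pi.single q 1) :=
    funext fun e => ((sD2_single L q e).trans (hindS e)).symm
  have hm1 : et ∉ ({eb, ev} : Finset (SE L)) := by
    simp only [het, heb, hev, Finset.mem_insert, Finset.mem_singleton,
      Sum.inl.injEq, Prod.mk.injEq, Fin.mk.injEq, reduceCtorEq, or_false]
    omega
  have hm2 : eb ∉ ({ev} : Finset (SE L)) := by
    simp only [heb, hev, Finset.mem_singleton, reduceCtorEq, not_false_eq_true]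
  have hcard : S.card = 3 := by
    rw [hS, Finset.card_insert_of_notMem hm1, Finset.card_insert_of_notMem hm2,
      Finset.card_singleton]
  obtain ⟨eh, hehS, hehval, heh'⟩ : ∃ eh, eh ∈ S ∧ K eh = 1 ∧ (eh = et ∨ eh = eb) := by
    rcases hh with hh | hh
    · exact ⟨et, by simp [hS], hh, Or.inl rfl⟩
    · exact ⟨eb, by simp [hS], hh, Or.inr rfl⟩
  have hehev : eh ≠ ev := by
    rcases heh' with h | h <;> rw [h] <;> exact Sum.inl_ne_inr
  have hpair : ({eh, ev} : Finset (SE L)) ⊆ S.filter fun e => K e ≠ 0 := by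
    intro x hx
    simp only [Finset.mem_insert, Finset.mem_singleton] at hx
    rcases hx with rfl | rfl
    · exact Finset.mem_filter.mpr ⟨hehS, by rw [hehval]; exact one_ne_zero⟩
    · refine Finset.mem_filter.mpr ⟨by simp [hS], by rw [hv]; exact one_ne_zero⟩
  have hpaircard : ({eh, ev} : Finset (SE L)).card = 2 := by
    rw [Finset.card_insert_of_notMem (by simpa using hehev), Finset.card_singleton]
  have hmge : 2 ≤ (S.filter fun e => K e ≠ 0).card := by
    have := Finset.card_le_card hpair
    omega
  have hb' : sD1 L (K + ind S) = ind D := by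
    rw [map_add, hKb, hSd2, sD1_sD2, add_zero]
  have hwt3 : wt (K + ind S) + 2 * (S.filter fun e => K e ≠ 0).card = wt K + 3 := by
    rw [wt_add_ind, hcard]
  have hminK' := hmin _ hb'
  omega


section Patterns

variable (L : ℕ) (hL : 3 ≤ L) (D : Finset (SV L)) (J : SE L → ZMod 2)
  (hmin : ∀ K : SE L → ZMod 2, sD1 L K = ind D → wt J ≤ wt K)
  (c0 : SP L → ZMod 2)
  (hKb : sD1 L (J + sD2 L c0) = ind D)
  (hKwt : wt (J + sD2 L c0) = wt J)
  (hPhi : ∀ c', wt (J + sD2 L c') = wt J →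
    Phi L (J + sD2 L c0) ≤ Phi L (J + sD2 L c'))

include hL hmin hKb hKwt hPhi

/-- pattern left,right,down -/
theorem pat1 (rv kv : ℕ) (hrv : rv < L - 1) (hkv : kv < L - 1)
    (hrvL : rv < L) (hkvL : kv < L) (hkv1L : kv + 1 < L)
    (hl : (J + sD2 L c0) (Sum.inl (⟨rv, hrvL⟩, ⟨kv, hkvL⟩)) = 1)
    (hrt : (J + sD2 L c0) (Sum.inl (⟨rv, hrvL⟩, ⟨kv + 1, hkv1L⟩)) = 1)
    (hd : (J + sD2 L c0) (Sum.inr (⟨rv, hrv⟩, ⟨kv, hkv⟩)) = 1) : False := by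
  by_cases hk0 : kv = 0
  · exact core_bdy L hL D J hmin c0 hKb hKwt rv kv kv hrv (Or.inl ⟨hk0, hk0⟩)
      hrvL (by omega) hkvL hkv (Or.inl hl) hd
  by_cases hkL : kv = L - 2
  · exact core_bdy L hL D J hmin c0 hKb hKwt rv (kv + 1) kv hrv
      (Or.inr ⟨by omega, by omega⟩) hrvL (by omega) (by omega) hkv (Or.inl hrt) hd
  rcases Nat.mod_two_eq_zero_or_one rv with he | he
  · exact core_int L hL D J hmin c0 hKb hKwt hPhi rv kv kv (kv - 1) hrv (by omega)
      (by omega) (Or.inl ⟨rfl, rfl, he⟩) hrvL (by omega) hkvL hkv (by omega)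
      (Or.inl hl) hd
  · exact core_int L hL D J hmin c0 hKb hKwt hPhi rv (kv + 1) kv (kv + 1) hrv (by omega)
      (by omega) (Or.inr ⟨by omega, rfl, he⟩) hrvL (by omega) (by omega) hkv (by omega)
      (Or.inl hrt) hd

/-- pattern left,right,up ; the vertex is `(a+1, kv)` -/
theorem pat2 (a kv : ℕ) (ha : a < L - 1) (hkv : kv < L - 1)
    (ha1L : a + 1 < L) (hkvL : kv < L) (hkv1L : kv + 1 < L)
    (hl : (J + sD2 L c0) (Sum.inl (⟨a + 1, ha1L⟩, ⟨kv, hkvL⟩)) = 1)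
    (hrt : (J + sD2 L c0) (Sum.inl (⟨a + 1, ha1L⟩, ⟨kv + 1, hkv1L⟩)) = 1)
    (hu : (J + sD2 L c0) (Sum.inr (⟨a, ha⟩, ⟨kv, hkv⟩)) = 1) : False := by
  by_cases hk0 : kv = 0
  · exact core_bdy L hL D J hmin c0 hKb hKwt a kv kv ha (Or.inl ⟨hk0, hk0⟩)
      (by omega) ha1L hkvL hkv (Or.inr hl) hu
  by_cases hkL : kv = L - 2
  · exact core_bdy L hL D J hmin c0 hKb hKwt a (kv + 1) kv ha
      (Or.inr ⟨by omega, by omega⟩) (by omega) ha1L (by omega) hkv (Or.inr hrt) hu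
  rcases Nat.mod_two_eq_zero_or_one a with he | he
  · exact core_int L hL D J hmin c0 hKb hKwt hPhi a kv kv (kv - 1) ha (by omega)
      (by omega) (Or.inl ⟨rfl, rfl, he⟩) (by omega) ha1L hkvL hkv (by omega)
      (Or.inr hl) hu
  · exact core_int L hL D J hmin c0 hKb hKwt hPhi a (kv + 1) kv (kv + 1) ha (by omega)
      (by omega) (Or.inr ⟨by omega, rfl, he⟩) (by omega) ha1L (by omega) hkv (by omega)
      (Or.inr hrt) hu

/-- pattern up,down,right ; the vertex is `(a+1, kv)` -/
theorem pat3 (a kv : ℕ) (ha : a < L - 1) (ha1 : a + 1 < L - 1) (hkv : kv < L - 1)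
    (ha1L : a + 1 < L) (hkv1L : kv + 1 < L)
    (hrt : (J + sD2 L c0) (Sum.inl (⟨a + 1, ha1L⟩, ⟨kv + 1, hkv1L⟩)) = 1)
    (hu : (J + sD2 L c0) (Sum.inr (⟨a, ha⟩, ⟨kv, hkv⟩)) = 1)
    (hd : (J + sD2 L c0) (Sum.inr (⟨a + 1, ha1⟩, ⟨kv, hkv⟩)) = 1) : False := by
  by_cases hkL : kv = L - 2
  · exact core_bdy L hL D J hmin c0 hKb hKwt a (kv + 1) kv ha
      (Or.inr ⟨by omega, by omega⟩) (by omega) ha1L (by omega) hkv (Or.inr hrt) hu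
  rcases Nat.mod_two_eq_zero_or_one a with he | he
  · -- a even, so the vertex row a+1 is odd : use plaquette row a+1  (move M_B)
    exact core_int L hL D J hmin c0 hKb hKwt hPhi (a + 1) (kv + 1) kv (kv + 1) ha1
      (by omega) (by omega) (Or.inr ⟨by omega, rfl, by omega⟩) ha1L (by omega)
      (by omega) hkv (by omega) (Or.inl hrt) hd
  · -- a odd : use plaquette row a (move M_D)
    exact core_int L hL D J hmin c0 hKb hKwt hPhi a (kv + 1) kv (kv + 1) ha (by omega)
      (by omega) (Or.inr ⟨by omega, rfl, he⟩) (by omega) ha1L (by omega) hkv (by omega)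
      (Or.inr hrt) hu

/-- pattern up,down,left ; the vertex is `(a+1, kv)` -/
theorem pat4 (a kv : ℕ) (ha : a < L - 1) (ha1 : a + 1 < L - 1) (hkv : kv < L - 1)
    (ha1L : a + 1 < L) (hkvL : kv < L)
    (hl : (J + sD2 L c0) (Sum.inl (⟨a + 1, ha1L⟩, ⟨kv, hkvL⟩)) = 1)
    (hu : (J + sD2 L c0) (Sum.inr (⟨a, ha⟩, ⟨kv, hkv⟩)) = 1)
    (hd : (J + sD2 L c0) (Sum.inr (⟨a + 1, ha1⟩, ⟨kv, hkv⟩)) = 1) : False := by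
  by_cases hk0 : kv = 0
  · exact core_bdy L hL D J hmin c0 hKb hKwt a kv kv ha (Or.inl ⟨hk0, hk0⟩)
      (by omega) ha1L hkvL hkv (Or.inr hl) hu
  rcases Nat.mod_two_eq_zero_or_one a with he | he
  · -- a even : use plaquette row a (move M_C)
    exact core_int L hL D J hmin c0 hKb hKwt hPhi a kv kv (kv - 1) ha (by omega)
      (by omega) (Or.inl ⟨rfl, rfl, he⟩) (by omega) ha1L hkvL hkv (by omega)
      (Or.inr hl) hu
  · -- a odd, row a+1 even : use plaquette row a+1 (move M_A)
    exact core_int L hL D J hmin c0 hKb hKwt hPhi (a + 1) kv kv (kv - 1) ha1 (by omega)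
      (by omega) (Or.inl ⟨rfl, rfl, by omega⟩) ha1L (by omega) hkvL hkv (by omega)
      (Or.inl hl) hd

end Patterns


theorem zite_one {C : Prop} [Decidable C] : ((if C then (1 : ZMod 2) else 0) = 1) ↔ C := by
  split_ifs with h <;> simp [h]

theorem sM1_01 (L : ℕ) (v : SV L) (e : SE L) : sM1 L v e = 0 ∨ sM1 L v e = 1 := by
  rcases e with e | e <;> simp only [sM1] <;> split_ifs <;> simp

theorem dsum (L : ℕ) (K : SE L → ZMod 2) (v : SV L) :
    (sD1 L K) v = ∑ e ∈ Finset.univ.filter (fun e => sM1 L v e = 1), K e := by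
  have h1 : (sD1 L K) v = ∑ e : SE L, sM1 L v e * K e := by
    simp [sD1, Matrix.mulVecLin_apply, Matrix.mulVec, dotProduct]
  rw [h1, Finset.sum_filter]
  refine Finset.sum_congr rfl (fun e _ => ?_)
  rcases sM1_01 L v e with h | h <;> rw [h] <;> simp

theorem filt_comm (L : ℕ) (K : SE L → ZMod 2) (v : SV L) :
    Finset.univ.filter (fun e => K e ≠ 0 ∧ sM1 L v e = 1) =
      (Finset.univ.filter (fun e => sM1 L v e = 1)).filter (fun e => K e ≠ 0) := by
  rw [Finset.filter_filter]
  apply Finset.filter_congr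
  intro e _
  exact and_comm

theorem cand_top (L : ℕ) (kv : ℕ) (hkv : kv < L - 1) (h0L : 0 < L) (h0m : 0 < L - 1)
    (hkvL : kv < L) (hkv1L : kv + 1 < L) :
    Finset.univ.filter (fun e => sM1 L ((⟨0, h0L⟩, ⟨kv, hkv⟩) : SV L) e = 1) =
      {Sum.inl (⟨0, h0L⟩, ⟨kv, hkvL⟩), Sum.inl (⟨0, h0L⟩, ⟨kv + 1, hkv1L⟩),
        Sum.inr (⟨0, h0m⟩, ⟨kv, hkv⟩)} := by
  ext e
  simp only [Finset.mem_filter, Finset.mem_univ, true_and, Finset.mem_insert,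
    Finset.mem_singleton]
  rcases e with ⟨⟨x1, hx1⟩, ⟨x2, hx2⟩⟩ | ⟨⟨x1, hx1⟩, ⟨x2, hx2⟩⟩ <;>
    simp only [sM1, Sum.inl.injEq, Sum.inr.injEq, Prod.mk.injEq, Fin.mk.injEq,
      reduceCtorEq, or_false, false_or, zite_one] <;>
    constructor <;> intro h <;> omega

theorem cand_mid (L : ℕ) (a kv : ℕ) (ha : a < L - 1) (ha1 : a + 1 < L - 1)
    (hkv : kv < L - 1) (ha1L : a + 1 < L) (hkvL : kv < L) (hkv1L : kv + 1 < L) :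
    Finset.univ.filter (fun e => sM1 L ((⟨a + 1, ha1L⟩, ⟨kv, hkv⟩) : SV L) e = 1) =
      {Sum.inl (⟨a + 1, ha1L⟩, ⟨kv, hkvL⟩), Sum.inl (⟨a + 1, ha1L⟩, ⟨kv + 1, hkv1L⟩),
        Sum.inr (⟨a, ha⟩, ⟨kv, hkv⟩), Sum.inr (⟨a + 1, ha1⟩, ⟨kv, hkv⟩)} := by
  ext e
  simp only [Finset.mem_filter, Finset.mem_univ, true_and, Finset.mem_insert,
    Finset.mem_singleton]
  rcases e with ⟨⟨x1, hx1⟩, ⟨x2, hx2⟩⟩ | ⟨⟨x1, hx1⟩, ⟨x2, hx2⟩⟩ <;>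
    simp only [sM1, Sum.inl.injEq, Sum.inr.injEq, Prod.mk.injEq, Fin.mk.injEq,
      reduceCtorEq, or_false, false_or, zite_one] <;>
    constructor <;> intro h <;> omega

theorem cand_bot (L : ℕ) (a kv : ℕ) (ha : a < L - 1) (hbot : ¬ (a + 1 < L - 1))
    (hkv : kv < L - 1) (ha1L : a + 1 < L) (hkvL : kv < L) (hkv1L : kv + 1 < L) :
    Finset.univ.filter (fun e => sM1 L ((⟨a + 1, ha1L⟩, ⟨kv, hkv⟩) : SV L) e = 1) =
      {Sum.inl (⟨a + 1, ha1L⟩, ⟨kv, hkvL⟩), Sum.inl (⟨a + 1, ha1L⟩, ⟨kv + 1, hkv1L⟩),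
        Sum.inr (⟨a, ha⟩, ⟨kv, hkv⟩)} := by
  ext e
  simp only [Finset.mem_filter, Finset.mem_univ, true_and, Finset.mem_insert,
    Finset.mem_singleton]
  rcases e with ⟨⟨x1, hx1⟩, ⟨x2, hx2⟩⟩ | ⟨⟨x1, hx1⟩, ⟨x2, hx2⟩⟩ <;>
    simp only [sM1, Sum.inl.injEq, Sum.inr.injEq, Prod.mk.injEq, Fin.mk.injEq,
      reduceCtorEq, or_false, false_or, zite_one] <;>
    constructor <;> intro h <;> omega

end Aux

/-- **Dissolving degree-3 defects in the planar surface code.**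
If `L ≥ 3`, `D ⊆ V∖B`, and `J` is a minimum Hamming-weight solution of `∂₁ J = 𝟙_D`,
then there is a `2`-chain `c` such that `J' = J + ∂₂ c` has the same weight, the same
relative boundary `𝟙_D`, and every vertex of `D` is an endpoint of exactly one edge of
the support of `J'`. -/
theorem planar_degree3_defect_resolution
    (L : ℕ) (hL : 3 ≤ L)
    (D : Finset (SV L))
    (J : SE L → ZMod 2)
    (hJ : sD1 L J = ind D)
    (hmin : ∀ K : SE L → ZMod 2, sD1 L K = ind D → wt J ≤ wt K) :
    ∃ c : SP L → ZMod 2,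
      wt (J + sD2 L c) = wt J ∧
      sD1 L (J + sD2 L c) = ind D ∧
      ∀ v ∈ D,
        (Finset.univ.filter
          (fun e : SE L => (J + sD2 L c) e ≠ 0 ∧ sM1 L v e = 1)).card = 1 := by
  classical
  have hT0 : (0 : SP L → ZMod 2) ∈
      Finset.univ.filter (fun c : SP L → ZMod 2 => wt (J + sD2 L c) = wt J) := by
    refine Finset.mem_filter.mpr ⟨Finset.mem_univ _, ?_⟩
    rw [map_zero, add_zero]
  obtain ⟨c0, hc0T, hc0min⟩ := Finset.exists_min_image
    (Finset.univ.filter (fun c : SP L → ZMod 2 => wt (J + sD2 L c) = wt J))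
    (fun c => Phi L (J + sD2 L c)) ⟨0, hT0⟩
  have hKwt : wt (J + sD2 L c0) = wt J := (Finset.mem_filter.mp hc0T).2
  have hKb : sD1 L (J + sD2 L c0) = ind D := by
    rw [map_add, hJ, sD1_sD2, add_zero]
  have hPhi : ∀ c', wt (J + sD2 L c') = wt J →
      Phi L (J + sD2 L c0) ≤ Phi L (J + sD2 L c') :=
    fun c' h => hc0min c' (Finset.mem_filter.mpr ⟨Finset.mem_univ _, h⟩)
  refine ⟨c0, hKwt, hKb, ?_⟩
  intro v hvD
  set K := J + sD2 L c0 with hK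
  have hone : (sD1 L K) v = 1 := by rw [hKb]; simp [ind, hvD]
  obtain ⟨⟨rv, hrvL⟩, ⟨kv, hkv⟩⟩ := v
  have hkvL : kv < L := by omega
  have hkv1L : kv + 1 < L := by omega
  by_cases h0 : rv = 0
  · subst h0
    have h0m : 0 < L - 1 := by omega
    have hcand := cand_top L kv hkv hrvL h0m hkvL hkv1L
    have hsum := dsum L K (⟨0, hrvL⟩, ⟨kv, hkv⟩)
    rw [hcand, Finset.sum_insert (by simp <;> omega), Finset.sum_insert (by simp),
      Finset.sum_singleton] at hsum
    rcases z2cases (K (Sum.inl (⟨0, hrvL⟩, ⟨kv, hkvL⟩))) with h1 | h1 <;>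
      rcases z2cases (K (Sum.inl (⟨0, hrvL⟩, ⟨kv + 1, hkv1L⟩))) with h2 | h2 <;>
      rcases z2cases (K (Sum.inr (⟨0, h0m⟩, ⟨kv, hkv⟩))) with h3 | h3 <;>
      rw [hsum, h1, h2, h3] at hone <;>
      first
      | exact absurd hone (by decide)
      | exact absurd (pat1 L hL D J hmin c0 hKb hKwt hPhi 0 kv h0m hkv hrvL hkvL
          hkv1L h1 h2 h3) not_false
      | (rw [filt_comm, hcand]
         simp [Finset.filter_insert, Finset.filter_singleton, h1, h2, h3])
  · obtain ⟨a, rfl⟩ : ∃ a, rv = a + 1 := ⟨rv - 1, by omega⟩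
    have ha : a < L - 1 := by omega
    by_cases hmid : a + 1 < L - 1
    · have hcand := cand_mid L a kv ha hmid hkv hrvL hkvL hkv1L
      have hsum := dsum L K (⟨a + 1, hrvL⟩, ⟨kv, hkv⟩)
      rw [hcand, Finset.sum_insert (by simp <;> omega), Finset.sum_insert (by simp),
        Finset.sum_insert (by simp <;> omega), Finset.sum_singleton] at hsum
      rcases z2cases (K (Sum.inl (⟨a + 1, hrvL⟩, ⟨kv, hkvL⟩))) with h1 | h1 <;>
        rcases z2cases (K (Sum.inl (⟨a + 1, hrvL⟩, ⟨kv + 1, hkv1L⟩))) with h2 | h2 <;>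
        rcases z2cases (K (Sum.inr (⟨a, ha⟩, ⟨kv, hkv⟩))) with h3 | h3 <;>
        rcases z2cases (K (Sum.inr (⟨a + 1, hmid⟩, ⟨kv, hkv⟩))) with h4 | h4 <;>
        rw [hsum, h1, h2, h3, h4] at hone <;>
        first
        | exact absurd hone (by decide)
        | exact absurd (pat1 L hL D J hmin c0 hKb hKwt hPhi (a + 1) kv hmid hkv hrvL
            hkvL hkv1L h1 h2 h4) not_false
        | exact absurd (pat2 L hL D J hmin c0 hKb hKwt hPhi a kv ha hkv hrvL hkvL
            hkv1L h1 h2 h3) not_false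
        | exact absurd (pat3 L hL D J hmin c0 hKb hKwt hPhi a kv ha hmid hkv hrvL
            hkv1L h2 h3 h4) not_false
        | exact absurd (pat4 L hL D J hmin c0 hKb hKwt hPhi a kv ha hmid hkv hrvL
            hkvL h1 h3 h4) not_false
        | (rw [filt_comm, hcand]
           simp [Finset.filter_insert, Finset.filter_singleton, h1, h2, h3, h4])
    · have hcand := cand_bot L a kv ha hmid hkv hrvL hkvL hkv1L
      have hsum := dsum L K (⟨a + 1, hrvL⟩, ⟨kv, hkv⟩)
      rw [hcand, Finset.sum_insert (by simp <;> omega), Finset.sum_insert (by simp),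
        Finset.sum_singleton] at hsum
      rcases z2cases (K (Sum.inl (⟨a + 1, hrvL⟩, ⟨kv, hkvL⟩))) with h1 | h1 <;>
        rcases z2cases (K (Sum.inl (⟨a + 1, hrvL⟩, ⟨kv + 1, hkv1L⟩))) with h2 | h2 <;>
        rcases z2cases (K (Sum.inr (⟨a, ha⟩, ⟨kv, hkv⟩))) with h3 | h3 <;>
        rw [hsum, h1, h2, h3] at hone <;>
        first
        | exact absurd hone (by decide)
        | exact absurd (pat2 L hL D J hmin c0 hKb hKwt hPhi a kv ha hkv hrvL hkvL
            hkv1L h1 h2 h3) not_false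
        | (rw [filt_comm, hcand]
           simp [Finset.filter_insert, Finset.filter_singleton, h1, h2, h3])
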